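/- (State distribution discrepancy bound) For two policies $\pi$ and $\pi_E$ on a finite MDP with discount factor $\gamma \in [0,1)$, the total variation distance between their discounted stationary state distributions satisfies $D_{TV}(d_\pi, d_{\pi_E}) \le \frac{\gamma}{1-\gamma} \mathbb{E}_{s \sim d_{\pi_E}}[D_{TV}(\pi(\cdot|s), \pi_E(\cdot|s))]$. -/

import Mathlib

open Matrix BigOperators

section Aux
variable {S : Type*} [Fintype S] [DecidableEq S]
set_option linter.unusedSectionVars false

/-- Column-stochastic matrices preserve nonnegativity and total mass of nonneg vectors. -/
lemma sd_stoch_mulVec (P : Matrix S S ℝ) (hP0 : ∀ s' s, 0 ≤ P s' s)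
    (hP1 : ∀ s, ∑ s', P s' s = 1) (v : S → ℝ) (hv0 : ∀ s, 0 ≤ v s) :
    (∀ s, 0 ≤ P.mulVec v s) ∧ (∑ s, P.mulVec v s = ∑ s, v s) := by
  constructor
  · intro s
    exact Finset.sum_nonneg fun s' _ => mul_nonneg (hP0 s s') (hv0 s')
  · simp only [Matrix.mulVec, dotProduct]
    rw [Finset.sum_comm]
    refine Finset.sum_congr rfl fun s' _ => ?_
    rw [← Finset.sum_mul, hP1 s', one_mul]

lemma sd_pow_stoch (P : Matrix S S ℝ) (hP0 : ∀ s' s, 0 ≤ P s' s)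
    (hP1 : ∀ s, ∑ s', P s' s = 1) (d0 : S → ℝ) (hd00 : ∀ s, 0 ≤ d0 s)
    (hd01 : ∑ s, d0 s = 1) :
    ∀ t : ℕ, (∀ s, 0 ≤ (P ^ t).mulVec d0 s) ∧ ∑ s, (P ^ t).mulVec d0 s = 1 := by
  intro t
  induction t with
  | zero => simpa [Matrix.one_mulVec] using ⟨hd00, hd01⟩
  | succ n ih =>
    have h := sd_stoch_mulVec P hP0 hP1 ((P ^ n).mulVec d0) ih.1
    rw [Matrix.mulVec_mulVec, ← pow_succ'] at h
    exact ⟨h.1, h.2.trans ih.2⟩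

lemma sd_summable (P : Matrix S S ℝ) (hP0 : ∀ s' s, 0 ≤ P s' s)
    (hP1 : ∀ s, ∑ s', P s' s = 1) (d0 : S → ℝ) (hd00 : ∀ s, 0 ≤ d0 s)
    (hd01 : ∑ s, d0 s = 1) {γ : ℝ} (hγ0 : 0 ≤ γ) (hγ1 : γ < 1) (s : S) :
    Summable fun t : ℕ => γ ^ t * ((P ^ t).mulVec d0 s) := by
  have hb : ∀ t : ℕ, (P ^ t).mulVec d0 s ≤ 1 := by
    intro t
    obtain ⟨h0, h1⟩ := sd_pow_stoch P hP0 hP1 d0 hd00 hd01 t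
    calc (P ^ t).mulVec d0 s ≤ ∑ s', (P ^ t).mulVec d0 s' :=
          Finset.single_le_sum (fun s' _ => h0 s') (Finset.mem_univ s)
      _ = 1 := h1
  refine Summable.of_nonneg_of_le (fun t => ?_) (fun t => ?_)
    (summable_geometric_of_lt_one hγ0 hγ1)
  · exact mul_nonneg (pow_nonneg hγ0 t) ((sd_pow_stoch P hP0 hP1 d0 hd00 hd01 t).1 s)
  · calc γ ^ t * ((P ^ t).mulVec d0 s) ≤ γ ^ t * 1 :=
        mul_le_mul_of_nonneg_left (hb t) (pow_nonneg hγ0 t)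
      _ = γ ^ t := mul_one _

/-- Fixed-point identity for the discounted stationary distribution. -/
lemma sd_fixed (P : Matrix S S ℝ) (hP0 : ∀ s' s, 0 ≤ P s' s)
    (hP1 : ∀ s, ∑ s', P s' s = 1) (d0 : S → ℝ) (hd00 : ∀ s, 0 ≤ d0 s)
    (hd01 : ∑ s, d0 s = 1) {γ : ℝ} (hγ0 : 0 ≤ γ) (hγ1 : γ < 1)
    (d : S → ℝ) (hd : ∀ s, d s = (1 - γ) * ∑' t : ℕ, γ ^ t * ((P ^ t).mulVec d0 s)) :
    (∀ s, 0 ≤ d s) ∧ (∀ s, d s = (1 - γ) * d0 s + γ * P.mulVec d s) := by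
  set g : S → ℝ := fun s => ∑' t : ℕ, γ ^ t * ((P ^ t).mulVec d0 s) with hg
  have hsum : ∀ s, Summable fun t : ℕ => γ ^ t * ((P ^ t).mulVec d0 s) :=
    fun s => sd_summable P hP0 hP1 d0 hd00 hd01 hγ0 hγ1 s
  have hgnn : ∀ s, 0 ≤ g s := fun s =>
    tsum_nonneg fun t => mul_nonneg (pow_nonneg hγ0 t)
      ((sd_pow_stoch P hP0 hP1 d0 hd00 hd01 t).1 s)
  have hkey : ∀ s, g s = d0 s + γ * ∑ s', P s s' * g s' := by
    intro s
    have h1 : g s = γ ^ 0 * ((P ^ 0).mulVec d0 s)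
        + ∑' t : ℕ, γ ^ (t + 1) * ((P ^ (t + 1)).mulVec d0 s) :=
      Summable.tsum_eq_zero_add (hsum s)
    have h2 : ∀ t : ℕ, γ ^ (t + 1) * ((P ^ (t + 1)).mulVec d0 s)
        = ∑ s', γ * (P s s' * (γ ^ t * ((P ^ t).mulVec d0 s'))) := by
      intro t
      rw [pow_succ' P t, ← Matrix.mulVec_mulVec]
      simp only [Matrix.mulVec, dotProduct]
      rw [Finset.mul_sum]
      refine Finset.sum_congr rfl fun s' _ => ?_
      ring
    have h3 : ∑' t : ℕ, γ ^ (t + 1) * ((P ^ (t + 1)).mulVec d0 s)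
        = γ * ∑ s', P s s' * g s' := by
      calc ∑' t : ℕ, γ ^ (t + 1) * ((P ^ (t + 1)).mulVec d0 s)
          = ∑' t : ℕ, ∑ s', γ * (P s s' * (γ ^ t * ((P ^ t).mulVec d0 s'))) := by
            exact tsum_congr h2
        _ = ∑ s', ∑' t : ℕ, γ * (P s s' * (γ ^ t * ((P ^ t).mulVec d0 s'))) := by
            refine Summable.tsum_finsetSum fun s' _ => ?_
            exact (((hsum s').mul_left (P s s')).mul_left γ)
        _ = ∑ s', γ * (P s s' * g s') := by
            refine Finset.sum_congr rfl fun s' _ => ?_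
            rw [tsum_mul_left, tsum_mul_left]
        _ = γ * ∑ s', P s s' * g s' := by rw [Finset.mul_sum]
    rw [h1, h3]
    simp [Matrix.one_mulVec]
  have hdg : ∀ s, d s = (1 - γ) * g s := fun s => hd s
  constructor
  · intro s; rw [hdg s]; exact mul_nonneg (by linarith) (hgnn s)
  · intro s
    have : P.mulVec d s = (1 - γ) * ∑ s', P s s' * g s' := by
      simp only [Matrix.mulVec, dotProduct, hdg, Finset.mul_sum]
      exact Finset.sum_congr rfl fun s' _ => by ring
    rw [hdg s, hkey s, this]
    ring

/-- ℓ¹ contraction of a column-stochastic matrix. -/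
lemma sd_contraction (P : Matrix S S ℝ) (hP0 : ∀ s' s, 0 ≤ P s' s)
    (hP1 : ∀ s, ∑ s', P s' s = 1) (e : S → ℝ) :
    ∑ s, |P.mulVec e s| ≤ ∑ s, |e s| := by
  calc ∑ s, |P.mulVec e s| ≤ ∑ s, ∑ s', |P s s' * e s'| :=
        Finset.sum_le_sum fun s _ => Finset.abs_sum_le_sum_abs _ _
    _ = ∑ s', |e s'| * ∑ s, P s s' := by
        rw [Finset.sum_comm]
        refine Finset.sum_congr rfl fun s' _ => ?_
        rw [Finset.mul_sum]
        refine Finset.sum_congr rfl fun s _ => ?_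
        rw [abs_mul, abs_of_nonneg (hP0 s s')]; ring
    _ = ∑ s', |e s'| := by
        refine Finset.sum_congr rfl fun s' _ => ?_
        rw [hP1 s', mul_one]

end Aux

/-- State distribution discrepancy bound:
`D_TV(d_π, d_πE) ≤ γ/(1-γ) · E_{s ∼ d_πE}[D_TV(π(·|s), πE(·|s))]`. -/
theorem state_dist_discrepancy
    {S A : Type*} [Fintype S] [Fintype A] [DecidableEq S]
    (M : S → A → S → ℝ) (π πE : S → A → ℝ) (d0 : S → ℝ) (γ : ℝ)
    (hγ0 : 0 ≤ γ) (hγ1 : γ < 1)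
    (hM0 : ∀ s a s', 0 ≤ M s a s') (hM1 : ∀ s a, ∑ s', M s a s' = 1)
    (hπ0 : ∀ s a, 0 ≤ π s a) (hπ1 : ∀ s, ∑ a, π s a = 1)
    (hπE0 : ∀ s a, 0 ≤ πE s a) (hπE1 : ∀ s, ∑ a, πE s a = 1)
    (hd00 : ∀ s, 0 ≤ d0 s) (hd01 : ∑ s, d0 s = 1)
    (Pπ PE : Matrix S S ℝ)
    (hPπ : ∀ s' s, Pπ s' s = ∑ a, π s a * M s a s')
    (hPE : ∀ s' s, PE s' s = ∑ a, πE s a * M s a s')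
    (dπ dE : S → ℝ)
    (hdπ : ∀ s, dπ s = (1 - γ) * ∑' t : ℕ, γ ^ t * ((Pπ ^ t).mulVec d0 s))
    (hdE : ∀ s, dE s = (1 - γ) * ∑' t : ℕ, γ ^ t * ((PE ^ t).mulVec d0 s)) :
    (1 / 2) * ∑ s, |dπ s - dE s|
      ≤ (γ / (1 - γ)) * ∑ s, dE s * ((1 / 2) * ∑ a, |π s a - πE s a|) := by
  have hγ1' : 0 < 1 - γ := by linarith
  -- stochasticity of Pπ and PE
  have hPπ0 : ∀ s' s, 0 ≤ Pπ s' s := fun s' s => by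
    rw [hPπ]; exact Finset.sum_nonneg fun a _ => mul_nonneg (hπ0 s a) (hM0 s a s')
  have hPE0 : ∀ s' s, 0 ≤ PE s' s := fun s' s => by
    rw [hPE]; exact Finset.sum_nonneg fun a _ => mul_nonneg (hπE0 s a) (hM0 s a s')
  have hPπ1 : ∀ s, ∑ s', Pπ s' s = 1 := by
    intro s
    simp only [hPπ]
    rw [Finset.sum_comm]
    calc ∑ a, ∑ s', π s a * M s a s' = ∑ a, π s a * ∑ s', M s a s' := by
          simp [Finset.mul_sum]
      _ = 1 := by simp only [hM1, mul_one]; exact hπ1 s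
  have hPE1 : ∀ s, ∑ s', PE s' s = 1 := by
    intro s
    simp only [hPE]
    rw [Finset.sum_comm]
    calc ∑ a, ∑ s', πE s a * M s a s' = ∑ a, πE s a * ∑ s', M s a s' := by
          simp [Finset.mul_sum]
      _ = 1 := by simp only [hM1, mul_one]; exact hπE1 s
  obtain ⟨hdπnn, hfixπ⟩ := sd_fixed Pπ hPπ0 hPπ1 d0 hd00 hd01 hγ0 hγ1 dπ hdπ
  obtain ⟨hdEnn, hfixE⟩ := sd_fixed PE hPE0 hPE1 d0 hd00 hd01 hγ0 hγ1 dE hdE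
  set e : S → ℝ := fun s => dπ s - dE s with he
  set q : S → ℝ := fun s => (Pπ - PE).mulVec dE s with hq
  have hes : ∀ s, e s = γ * Pπ.mulVec e s + γ * q s := by
    intro s
    have h1 : Pπ.mulVec e s = Pπ.mulVec dπ s - Pπ.mulVec dE s := by
      simp only [Matrix.mulVec, dotProduct, he, ← Finset.sum_sub_distrib]
      exact Finset.sum_congr rfl fun s' _ => by ring
    have h2 : q s = Pπ.mulVec dE s - PE.mulVec dE s := by
      simp only [hq, Matrix.mulVec, dotProduct, Matrix.sub_apply,
        ← Finset.sum_sub_distrib]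
      exact Finset.sum_congr rfl fun s' _ => by ring
    have := hfixπ s
    have := hfixE s
    rw [h1, h2]; simp only [he]
    linarith
  -- ℓ¹ bound on e
  have hsum1 : ∑ s, |e s| ≤ γ * ∑ s, |e s| + γ * ∑ s, |q s| := by
    calc ∑ s, |e s| ≤ ∑ s, (γ * |Pπ.mulVec e s| + γ * |q s|) := by
          refine Finset.sum_le_sum fun s _ => ?_
          rw [hes s]
          calc |γ * Pπ.mulVec e s + γ * q s|
              ≤ |γ * Pπ.mulVec e s| + |γ * q s| := abs_add_le _ _
            _ = γ * |Pπ.mulVec e s| + γ * |q s| := by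
                rw [abs_mul, abs_mul, abs_of_nonneg hγ0]
      _ = γ * ∑ s, |Pπ.mulVec e s| + γ * ∑ s, |q s| := by
          rw [Finset.sum_add_distrib, Finset.mul_sum, Finset.mul_sum]
      _ ≤ γ * ∑ s, |e s| + γ * ∑ s, |q s| := by
          have := sd_contraction Pπ hPπ0 hPπ1 e
          nlinarith
  have hsum2 : ∑ s, |e s| ≤ (γ / (1 - γ)) * ∑ s, |q s| := by
    rw [div_mul_eq_mul_div, le_div_iff₀ hγ1']
    nlinarith
  -- bound ∑ |q|
  have hqb : ∑ s, |q s| ≤ ∑ s, dE s * ∑ a, |π s a - πE s a| := by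
    have hq' : ∀ s', q s' = ∑ s, ∑ a, (π s a - πE s a) * M s a s' * dE s := by
      intro s'
      simp only [hq, Matrix.mulVec, dotProduct, Matrix.sub_apply, hPπ, hPE,
        ← Finset.sum_sub_distrib, Finset.sum_mul]
      refine Finset.sum_congr rfl fun s _ => Finset.sum_congr rfl fun a _ => by ring
    calc ∑ s', |q s'| ≤ ∑ s', ∑ s, ∑ a, |π s a - πE s a| * M s a s' * dE s := by
          refine Finset.sum_le_sum fun s' _ => ?_
          rw [hq' s']
          calc |∑ s, ∑ a, (π s a - πE s a) * M s a s' * dE s|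
              ≤ ∑ s, |∑ a, (π s a - πE s a) * M s a s' * dE s| :=
                Finset.abs_sum_le_sum_abs _ _
            _ ≤ ∑ s, ∑ a, |π s a - πE s a| * M s a s' * dE s := by
                refine Finset.sum_le_sum fun s _ => ?_
                calc |∑ a, (π s a - πE s a) * M s a s' * dE s|
                    ≤ ∑ a, |(π s a - πE s a) * M s a s' * dE s| :=
                      Finset.abs_sum_le_sum_abs _ _
                  _ = ∑ a, |π s a - πE s a| * M s a s' * dE s := by
                      refine Finset.sum_congr rfl fun a _ => ?_
                      rw [abs_mul, abs_mul, abs_of_nonneg (hM0 s a s'),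
                        abs_of_nonneg (hdEnn s)]
      _ = ∑ s, dE s * ∑ a, |π s a - πE s a| := by
          rw [Finset.sum_comm]
          refine Finset.sum_congr rfl fun s _ => ?_
          rw [Finset.sum_comm, Finset.mul_sum]
          refine Finset.sum_congr rfl fun a _ => ?_
          calc ∑ x, |π s a - πE s a| * M s a x * dE s
              = (|π s a - πE s a| * dE s) * ∑ x, M s a x := by
                rw [Finset.mul_sum]
                exact Finset.sum_congr rfl fun x _ => by ring
            _ = dE s * |π s a - πE s a| := by rw [hM1 s a]; ring
  -- conclude
  have hfinal : ∑ s, |e s| ≤ (γ / (1 - γ)) * ∑ s, dE s * ∑ a, |π s a - πE s a| :=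
    hsum2.trans (mul_le_mul_of_nonneg_left hqb (div_nonneg hγ0 hγ1'.le))
  have hrhs : (γ / (1 - γ)) * ∑ s, dE s * ((1 / 2) * ∑ a, |π s a - πE s a|)
      = (1 / 2) * ((γ / (1 - γ)) * ∑ s, dE s * ∑ a, |π s a - πE s a|) := by
    rw [Finset.mul_sum, Finset.mul_sum, Finset.mul_sum]
    ring_nf
  rw [hrhs]
  have : ∑ s, |e s| = ∑ s, |dπ s - dE s| := rfl
  linarith [mul_le_mul_of_nonneg_left hfinal (by norm_num : (0:ℝ) ≤ 1/2)]
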